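/- Let (S,K,I) be a balanced split graph with |I| ≥ 2 such that σ_{uv}(S) ≥ 1 for all distinct u,v ∈ I (i.e., the factor graph Φ(S) is complete). If x is a vertex of S that belongs to no induced P4 of S (an inactive vertex), then x is universal, i.e., x is adjacent to every other vertex of S. -/

import Mathlib

open SimpleGraph

/-- `T` is a 4-element vertex subset of `S` whose induced subgraph is a path on 4 vertices. -/
def IsInducedP4 {V : Type*} (S : SimpleGraph V) (T : Finset V) : Prop :=
  T.card = 4 ∧ Nonempty (S.induce (T : Set V) ≃g pathGraph 4)

/-- `σ_{uv}(S)`: the number of induced `P4`'s of `S` containing both `u` and `v`. -/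
noncomputable def sigmaP4 {V : Type*} (S : SimpleGraph V) (u v : V) : ℕ :=
  Nat.card {T : Finset V // IsInducedP4 S T ∧ u ∈ T ∧ v ∈ T}

lemma p4_dest {V : Type*} (S : SimpleGraph V) (T : Finset V) (h : IsInducedP4 S T) :
    ∃ a b c d : V, a ∈ T ∧ b ∈ T ∧ c ∈ T ∧ d ∈ T ∧
      (∀ t ∈ T, t = a ∨ t = b ∨ t = c ∨ t = d) ∧
      a ≠ b ∧ a ≠ c ∧ a ≠ d ∧ b ≠ c ∧ b ≠ d ∧ c ≠ d ∧
      S.Adj a b ∧ S.Adj b c ∧ S.Adj c d ∧ ¬S.Adj a c ∧ ¬S.Adj a d ∧ ¬S.Adj b d := by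
  obtain ⟨hcard, ⟨e⟩⟩ := h
  have inj : Function.Injective e.symm := e.symm.toEquiv.injective
  have adj : ∀ i j : Fin 4, S.Adj (e.symm i).1 (e.symm j).1 ↔ (pathGraph 4).Adj i j :=
    fun i j => e.symm.map_adj_iff
  refine ⟨(e.symm 0).1, (e.symm 1).1, (e.symm 2).1, (e.symm 3).1,
    (e.symm 0).2, (e.symm 1).2, (e.symm 2).2, (e.symm 3).2, ?_,
    ?_, ?_, ?_, ?_, ?_, ?_,
    (adj 0 1).mpr (by rw [pathGraph_adj]; omega),
    (adj 1 2).mpr (by rw [pathGraph_adj]; omega),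
    (adj 2 3).mpr (by rw [pathGraph_adj]; omega),
    fun h => by rw [adj 0 2, pathGraph_adj] at h; omega,
    fun h => by rw [adj 0 3, pathGraph_adj] at h; omega,
    fun h => by rw [adj 1 3, pathGraph_adj] at h; omega⟩
  · intro t ht
    obtain ⟨i, hi⟩ : ∃ i : Fin 4, e.symm i = ⟨t, ht⟩ := ⟨e ⟨t, ht⟩, e.symm_apply_apply _⟩
    have := (congrArg Subtype.val hi).symm
    fin_cases i
    · exact .inl this
    · exact .inr (.inl this)
    · exact .inr (.inr (.inl this))
    · exact .inr (.inr (.inr this))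
  all_goals
    intro h
    have := inj (Subtype.ext h)
    simp at this

lemma p4_mk {V : Type*} [DecidableEq V] (S : SimpleGraph V) (p q r s : V)
    (hpq : p ≠ q) (hpr : p ≠ r) (hps : p ≠ s) (hqr : q ≠ r) (hqs : q ≠ s) (hrs : r ≠ s)
    (apq : S.Adj p q) (aqr : S.Adj q r) (ars : S.Adj r s)
    (npr : ¬ S.Adj p r) (nps : ¬ S.Adj p s) (nqs : ¬ S.Adj q s) :
    IsInducedP4 S {p, q, r, s} := by
  have pg : ∀ i j : Fin 4, (i.val + 1 = j.val ∨ j.val + 1 = i.val) → (pathGraph 4).Adj i j :=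
    fun i j h => pathGraph_adj.mpr h
  have npg : ∀ i j : Fin 4, ¬(i.val + 1 = j.val ∨ j.val + 1 = i.val) → ¬(pathGraph 4).Adj i j :=
    fun i j h hadj => h (pathGraph_adj.mp hadj)
  refine ⟨?_, ?_⟩
  · rw [Finset.card_insert_of_notMem (by simp [hpq, hpr, hps]),
      Finset.card_insert_of_notMem (by simp [hqr, hqs]),
      Finset.card_insert_of_notMem (by simp [hrs]), Finset.card_singleton]
  · have hp : p ∈ (({p, q, r, s} : Finset V) : Set V) := by simp
    have hq : q ∈ (({p, q, r, s} : Finset V) : Set V) := by simp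
    have hr : r ∈ (({p, q, r, s} : Finset V) : Set V) := by simp
    have hs : s ∈ (({p, q, r, s} : Finset V) : Set V) := by simp
    let g : Fin 4 → (({p, q, r, s} : Finset V) : Set V) := ![⟨p, hp⟩, ⟨q, hq⟩, ⟨r, hr⟩, ⟨s, hs⟩]
    have hbij : Function.Bijective g := by
      constructor
      · intro i j hij
        fin_cases i <;> fin_cases j <;> simp_all [g]
      · rintro ⟨t, ht⟩
        simp only [Finset.coe_insert, Set.mem_insert_iff, Finset.coe_singleton,
          Set.mem_singleton_iff] at ht
        rcases ht with rfl | rfl | rfl | rfl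
        exacts [⟨0, rfl⟩, ⟨1, rfl⟩, ⟨2, rfl⟩, ⟨3, rfl⟩]
    refine ⟨(SimpleGraph.Iso.symm ⟨Equiv.ofBijective g hbij, ?_⟩)⟩
    intro i j
    show (S.induce _).Adj (g i) (g j) ↔ (pathGraph 4).Adj i j
    fin_cases i <;> fin_cases j
    exacts [iff_of_false (S.loopless.irrefl p) (npg 0 0 (by decide)),
      iff_of_true apq (pg 0 1 (by decide)),
      iff_of_false npr (npg 0 2 (by decide)),
      iff_of_false nps (npg 0 3 (by decide)),
      iff_of_true apq.symm (pg 1 0 (by decide)),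
      iff_of_false (S.loopless.irrefl q) (npg 1 1 (by decide)),
      iff_of_true aqr (pg 1 2 (by decide)),
      iff_of_false nqs (npg 1 3 (by decide)),
      iff_of_false (fun h => npr h.symm) (npg 2 0 (by decide)),
      iff_of_true aqr.symm (pg 2 1 (by decide)),
      iff_of_false (S.loopless.irrefl r) (npg 2 2 (by decide)),
      iff_of_true ars (pg 2 3 (by decide)),
      iff_of_false (fun h => nps h.symm) (npg 3 0 (by decide)),
      iff_of_false (fun h => nqs h.symm) (npg 3 1 (by decide)),
      iff_of_true ars.symm (pg 3 2 (by decide)),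
      iff_of_false (S.loopless.irrefl s) (npg 3 3 (by decide))]

theorem stmt12 {V : Type*} [Fintype V] [DecidableEq V] [Nonempty V]
    (S : SimpleGraph V) [DecidableRel S.Adj] (K I : Finset V)
    (hpart : K ∪ I = Finset.univ) (hdisj : Disjoint K I)
    (hK : S.IsClique (K : Set V)) (hI : Sᶜ.IsClique (I : Set V))
    (hbK : K.card = S.cliqueNum) (hbI : I.card = Sᶜ.cliqueNum)
    (hI2 : 2 ≤ I.card)
    (hcomp : ∀ u ∈ I, ∀ v ∈ I, u ≠ v → 1 ≤ sigmaP4 S u v)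
    (x : V) (hx : ¬ ∃ T : Finset V, IsInducedP4 S T ∧ x ∈ T) :
    ∀ w : V, w ≠ x → S.Adj x w := by
  -- from sigma ≥ 1 extract a P4
  have hsig : ∀ u ∈ I, ∀ v ∈ I, u ≠ v →
      ∃ T : Finset V, IsInducedP4 S T ∧ u ∈ T ∧ v ∈ T := by
    intro u hu v hv huv
    have h1 := hcomp u hu v hv huv
    have h2 : 0 < Nat.card {T : Finset V // IsInducedP4 S T ∧ u ∈ T ∧ v ∈ T} := h1
    obtain ⟨⟨⟨T, hT⟩⟩, -⟩ := Nat.card_pos_iff.mp h2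
    exact ⟨T, hT⟩
  have hKI : ∀ v : V, v ∈ K ∨ v ∈ I := by
    intro v
    have : v ∈ K ∪ I := hpart ▸ Finset.mem_univ v
    exact Finset.mem_union.mp this
  -- I vertices are pairwise nonadjacent
  have hInadj : ∀ u ∈ I, ∀ v ∈ I, ¬S.Adj u v := by
    intro u hu v hv h
    rcases eq_or_ne u v with rfl | hne
    · exact S.loopless.irrefl u h
    · exact (hI hu hv hne).2 h
  -- a neighbor of an I vertex lies in K
  have hnbK : ∀ u ∈ I, ∀ v : V, S.Adj u v → v ∈ K := by
    intro u hu v hadj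
    rcases hKI v with hv | hv
    · exact hv
    · exact absurd hadj (hInadj u hu v hv)
  -- x is not in I
  have hxK : x ∈ K := by
    rcases hKI x with h | h
    · exact h
    obtain ⟨u, hu, hux⟩ := Finset.exists_mem_ne (s := I) (by omega) x
    obtain ⟨T, hT, hxT, -⟩ := hsig x h u hu (Ne.symm hux)
    exact absurd ⟨T, hT, hxT⟩ hx
  intro w hw
  rcases hKI w with hwK | hwI
  · exact hK hxK hwK (Ne.symm hw)
  by_contra hnadj
  -- x has a neighbor in I, else insert x I is a bigger independent set
  have hxnbr : ∃ u ∈ I, S.Adj x u := by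
    by_contra hno
    push_neg at hno
    have hxnI : x ∉ I := fun h => absurd hxK (Finset.disjoint_right.mp hdisj h)
    have hclq : Sᶜ.IsClique ((insert x I : Finset V) : Set V) := by
      intro a ha b hb hab
      simp only [Finset.coe_insert, Set.mem_insert_iff, Finset.mem_coe] at ha hb
      rcases ha with rfl | ha
      · rcases hb with rfl | hb
        · exact absurd rfl hab
        · exact ⟨hab, hno b hb⟩
      · rcases hb with rfl | hb
        · exact ⟨hab, fun h => hno a ha h.symm⟩
        · exact hI ha hb hab
    have := SimpleGraph.IsClique.card_le_cliqueNum (G := Sᶜ) (t := insert x I) (tc := hclq)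
    rw [Finset.card_insert_of_notMem hxnI, ← hbI] at this
    omega
  obtain ⟨u, huI, hxu⟩ := hxnbr
  have huw : u ≠ w := fun h => hnadj (h ▸ hxu)
  obtain ⟨T, hT, huT, hwT⟩ := hsig u huI w hwI huw
  have hxT : x ∉ T := fun h => hx ⟨T, hT, h⟩
  obtain ⟨a, b, c, d, haT, hbT, hcT, hdT, hcov, hab, hac, had, hbc, hbd, hcd,
    Aab, Abc, Acd, Nac, Nad, Nbd⟩ := p4_dest S T hT
  have hnuw : ¬S.Adj u w := hInadj u huI w hwI
  -- x is distinct from all T members and adjacent (in K) to K-members of T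
  have hxne : ∀ t ∈ T, x ≠ t := fun t ht h => hxT (h ▸ ht)
  have hxadjK : ∀ t ∈ T, t ∈ K → S.Adj x t := fun t ht htK => hK hxK htK (hxne t ht)
  -- the two I-vertices u,w must be the endpoints a,d
  have hxI : x ∉ I := fun h => absurd hxK (Finset.disjoint_right.mp hdisj h)
  have hux : u ≠ x := fun h => hxI (h ▸ huI)
  have hwx : w ≠ x := hw
  rcases hcov u huT with rfl | rfl | rfl | rfl <;> rcases hcov w hwT with rfl | rfl | rfl | rfl
  -- u = a cases
  · exact huw rfl
  · exact hnuw Aab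
  · -- u = a, w = c : b, d ∈ K adjacent, contradiction with ¬Adj b d
    exact Nbd (hK (hnbK u huI b Aab) (hnbK w hwI d Acd) hbd)
  · -- u = a, w = d : main case; c ∈ K, build P4 u-x-c-w
    have hcK : c ∈ K := hnbK w hwI c Acd.symm
    have hxc : S.Adj x c := hxadjK c hcT hcK
    have hP4 : IsInducedP4 S {u, x, c, w} :=
      p4_mk S u x c w hux hac had (hxne c hcT) hwx.symm hcd
        hxu.symm hxc Acd Nac Nad hnadj
    exact hx ⟨{u, x, c, w}, hP4, by simp⟩
  -- u = b cases
  · exact hnuw Aab.symm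
  · exact huw rfl
  · exact hnuw Abc
  · -- u = b, w = d : a, c ∈ K adjacent to each other? a ∈ K since Adj a b with b=u∈I
    exact Nac (hK (hnbK u huI a Aab.symm) (hnbK w hwI c Acd.symm) hac)
  -- u = c cases
  · -- u = c, w = a
    exact Nbd (hK (hnbK w hwI b Aab) (hnbK u huI d Acd) hbd)
  · exact hnuw Abc.symm
  · exact huw rfl
  · exact hnuw Acd
  -- u = d cases
  · -- u = d, w = a : main case; b ∈ K, build P4 u-x-b-w
    have hbK2 : b ∈ K := hnbK w hwI b Aab
    have hxb : S.Adj x b := hxadjK b hbT hbK2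
    have hP4 : IsInducedP4 S {u, x, b, w} :=
      p4_mk S u x b w hux (Ne.symm hbd) (Ne.symm had) (hxne b hbT) hwx.symm (Ne.symm hab)
        hxu.symm hxb Aab.symm (fun h => Nbd h.symm) (fun h => Nad h.symm) hnadj
    exact hx ⟨{u, x, b, w}, hP4, by simp⟩
  · exact Nac (hK (hnbK w hwI a Aab.symm) (hnbK u huI c Acd.symm) hac)
  · exact hnuw Acd.symm
  · exact huw rfl
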